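/- For a poset P, an element Z ∈ P, and elements T, S ∈ P, the difference μ_P(T,S) − μ_{P∖{Z}}(T,S) equals μ_P(T,Z)·μ_P(Z,S), where μ_{P∖{Z}}(T,S) is taken to be 0 if T = Z or S = Z. -/
import Mathlib


/-- The Möbius function of the induced subposet of `β` on the finite set `P`. -/
def mobP {β : Type*} [PartialOrder β] [DecidableEq β]
    [DecidableRel ((· ≤ ·) : β → β → Prop)] [DecidableRel ((· < ·) : β → β → Prop)]
    (P : Finset β) (T S : β) : ℤ :=
  if T = S then 1
  else if T ∈ P ∧ S ∈ P ∧ T ≤ S then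
    - ∑ U ∈ (P.filter fun U => T ≤ U ∧ U < S).attach, mobP P T U.1
  else 0
termination_by (P.filter fun U => U < S).card
decreasing_by
  rcases Finset.mem_filter.mp U.2 with ⟨hUP, _, hUS⟩
  apply Finset.card_lt_card
  rw [Finset.ssubset_iff_of_subset]
  · exact ⟨U.1, Finset.mem_filter.mpr ⟨hUP, hUS⟩,
      fun h => lt_irrefl _ (Finset.mem_filter.mp h).2⟩
  · intro x hx
    rcases Finset.mem_filter.mp hx with ⟨hxP, hxU⟩
    exact Finset.mem_filter.mpr ⟨hxP, hxU.trans hUS⟩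

section Aux
variable {β : Type*} [PartialOrder β] [DecidableEq β]
    [DecidableRel ((· ≤ ·) : β → β → Prop)] [DecidableRel ((· < ·) : β → β → Prop)]

lemma mobP_self (P : Finset β) (T : β) : mobP P T T = 1 := by
  rw [mobP]; simp

lemma mobP_of_not_le (P : Finset β) {T S : β} (hne : T ≠ S) (h : ¬ T ≤ S) :
    mobP P T S = 0 := by
  rw [mobP, if_neg hne, if_neg (by tauto)]

lemma mobP_eq (P : Finset β) {T S : β} (hT : T ∈ P) (hS : S ∈ P) (hTS : T ≤ S)
    (hne : T ≠ S) :
    mobP P T S = -∑ u ∈ P.filter fun U => T ≤ U ∧ U < S, mobP P T u := by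
  rw [mobP, if_neg hne, if_pos ⟨hT, hS, hTS⟩, Finset.sum_attach]

lemma sum_mobZ (P : Finset β) {Z T S : β} (hZ : Z ∈ P) (hS : S ∈ P) (hTZ : T ≤ Z)
    (hSZ : S ≠ Z) :
    ∑ u ∈ P.filter fun U => T ≤ U ∧ U < S, mobP P Z u = - mobP P Z S := by
  by_cases hZS : Z ≤ S
  · rw [mobP_eq P hZ hS hZS (Ne.symm hSZ), neg_neg]
    refine (Finset.sum_subset ?_ ?_).symm
    · intro x hx
      rcases Finset.mem_filter.mp hx with ⟨hxP, hZx, hxS⟩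
      exact Finset.mem_filter.mpr ⟨hxP, hTZ.trans hZx, hxS⟩
    · intro x hx hnx
      have hZx : ¬ Z ≤ x := fun h =>
        hnx (Finset.mem_filter.mpr ⟨(Finset.mem_filter.mp hx).1, h,
          (Finset.mem_filter.mp hx).2.2⟩)
      exact mobP_of_not_le P (fun he => hZx he.le) hZx
  · rw [mobP_of_not_le P (Ne.symm hSZ) hZS, neg_zero]
    refine Finset.sum_eq_zero fun x hx => ?_
    rcases Finset.mem_filter.mp hx with ⟨_, _, hxS⟩
    have hZx : ¬ Z ≤ x := fun h => hZS (h.trans hxS.le)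
    exact mobP_of_not_le P (fun he => hZx he.le) hZx

lemma mobP_key (P : Finset β) (Z T : β) (hZ : Z ∈ P) (hT : T ∈ P) :
    ∀ n (S : β), S ∈ P → (P.filter fun U => U < S).card < n →
      mobP P T S - (if T = Z ∨ S = Z then 0 else mobP (P.erase Z) T S)
        = mobP P T Z * mobP P Z S := by
  intro n
  induction n with
  | zero => intro S _ h; omega
  | succ n ih =>
    intro S hS hcard
    by_cases heq : T = S
    · subst heq
      by_cases hTZ : T = Z
      · subst hTZ; simp [mobP_self]
      · rw [if_neg (by tauto), mobP_self, mobP_self, sub_self]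
        by_cases hle : T ≤ Z
        · have hZT : ¬ Z ≤ T := fun h => hTZ (le_antisymm hle h)
          rw [mobP_of_not_le P (Ne.symm hTZ) hZT, mul_zero]
        · rw [mobP_of_not_le P hTZ hle, zero_mul]
    by_cases hle : T ≤ S
    swap
    · have h1 : mobP P T S = 0 := mobP_of_not_le P heq hle
      have h2 : (if T = Z ∨ S = Z then (0:ℤ) else mobP (P.erase Z) T S) = 0 := by
        split
        · rfl
        · exact mobP_of_not_le _ heq hle
      rw [h1, h2, sub_self]
      symm
      by_cases hTleZ : T ≤ Z
      · have hZS : ¬ Z ≤ S := fun h => hle (hTleZ.trans h)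
        have hZS' : Z ≠ S := fun h => hle (h ▸ hTleZ)
        rw [mobP_of_not_le P hZS' hZS, mul_zero]
      · have hTZ' : T ≠ Z := fun h => hTleZ h.le
        rw [mobP_of_not_le P hTZ' hTleZ, zero_mul]
    · by_cases hTZ : T = Z
      · subst hTZ; rw [if_pos (Or.inl rfl), sub_zero, mobP_self, one_mul]
      by_cases hSZ : S = Z
      · subst hSZ; rw [if_pos (Or.inr rfl), sub_zero, mobP_self, mul_one]
      rw [if_neg (by tauto)]
      have hT' : T ∈ P.erase Z := Finset.mem_erase.mpr ⟨hTZ, hT⟩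
      have hS' : S ∈ P.erase Z := Finset.mem_erase.mpr ⟨hSZ, hS⟩
      have hF' : (P.erase Z).filter (fun U => T ≤ U ∧ U < S)
          = (P.filter fun U => T ≤ U ∧ U < S).filter (fun u => u ≠ Z) := by
        ext x
        simp only [Finset.mem_filter, Finset.mem_erase]
        tauto
      have hsum2 : (∑ u ∈ (P.erase Z).filter (fun U => T ≤ U ∧ U < S),
            mobP (P.erase Z) T u)
          = ∑ u ∈ P.filter (fun U => T ≤ U ∧ U < S),
              if u ≠ Z then mobP (P.erase Z) T u else 0 := by
        rw [hF', Finset.sum_filter]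
      rw [mobP_eq P hT hS hle heq, mobP_eq (P.erase Z) hT' hS' hle heq, hsum2]
      have hstep : ∀ u ∈ P.filter (fun U => T ≤ U ∧ U < S),
          mobP P T u - (if u ≠ Z then mobP (P.erase Z) T u else 0)
            = mobP P T Z * mobP P Z u := by
        intro u hu
        rcases Finset.mem_filter.mp hu with ⟨huP, hTu, huS⟩
        have hcard' : (P.filter fun U => U < u).card < n := by
          have hsub : (P.filter fun U => U < u) ⊂ (P.filter fun U => U < S) := by
            rw [Finset.ssubset_iff_of_subset]
            · exact ⟨u, Finset.mem_filter.mpr ⟨huP, huS⟩,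
                fun h => lt_irrefl _ (Finset.mem_filter.mp h).2⟩
            · intro x hx
              rcases Finset.mem_filter.mp hx with ⟨hxP, hxu⟩
              exact Finset.mem_filter.mpr ⟨hxP, hxu.trans huS⟩
          have := Finset.card_lt_card hsub
          omega
        have hif : (if u ≠ Z then mobP (P.erase Z) T u else 0)
            = (if T = Z ∨ u = Z then 0 else mobP (P.erase Z) T u) := by
          by_cases h : u = Z <;> simp [h, hTZ]
        rw [hif]
        exact ih u huP hcard'
      have hsum : (∑ u ∈ P.filter (fun U => T ≤ U ∧ U < S), mobP P T u)
          - (∑ u ∈ P.filter (fun U => T ≤ U ∧ U < S),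
              if u ≠ Z then mobP (P.erase Z) T u else 0)
          = mobP P T Z * ∑ u ∈ P.filter (fun U => T ≤ U ∧ U < S), mobP P Z u := by
        rw [← Finset.sum_sub_distrib, Finset.mul_sum]
        exact Finset.sum_congr rfl hstep
      have : -(∑ u ∈ P.filter (fun U => T ≤ U ∧ U < S), mobP P T u)
          - -(∑ u ∈ P.filter (fun U => T ≤ U ∧ U < S),
              if u ≠ Z then mobP (P.erase Z) T u else 0)
          = -(mobP P T Z * ∑ u ∈ P.filter (fun U => T ≤ U ∧ U < S), mobP P Z u) := by
        rw [← hsum]; ring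
      rw [this]
      by_cases hTleZ : T ≤ Z
      · rw [sum_mobZ P hZ hS hTleZ hSZ]; ring
      · rw [mobP_of_not_le P hTZ hTleZ]; ring

end Aux

/-- Deleting one element `Z` from a finite poset changes the Möbius function by
`μ_P(T,Z)·μ_P(Z,S)`, with the convention that `μ_{P∖{Z}}(T,S) = 0` when `T = Z`
or `S = Z`. -/
theorem mobius_delete_formula {β : Type*} [PartialOrder β] [DecidableEq β]
    [DecidableRel ((· ≤ ·) : β → β → Prop)] [DecidableRel ((· < ·) : β → β → Prop)]
    (P : Finset β) (Z T S : β) (hZ : Z ∈ P) (hT : T ∈ P) (hS : S ∈ P) :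
    mobP P T S - (if T = Z ∨ S = Z then 0 else mobP (P.erase Z) T S)
      = mobP P T Z * mobP P Z S := by
  exact mobP_key P Z T hZ hT ((P.filter fun U => U < S).card + 1) S hS (by omega)
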